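/- Let k > 0 and let f : [0,∞) → ℝ be twice differentiable with f(0) = 0, f′(0) = 1, f(r) > 0 for all r > 0, and f″(r) ≥ k²·f(r) for all r ≥ 0. Then f′(r) ≥ cosh(kr) for all r ≥ 0. -/

import Mathlib

/-- If `g 0 = 0` and `g` has nonnegative derivative `g'` on `[0,∞)`, then `g ≥ 0` there. -/
lemma stmt_6_aux (g g' : ℝ → ℝ) (hg : ∀ x, HasDerivAt g (g' x) x)
    (h0 : g 0 = 0) (h' : ∀ r : ℝ, 0 ≤ r → 0 ≤ g' r) : ∀ r : ℝ, 0 ≤ r → 0 ≤ g r := by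
  intro r hr
  have hdiff : Differentiable ℝ g := fun x => (hg x).differentiableAt
  have hmono : MonotoneOn g (Set.Ici 0) := by
    apply monotoneOn_of_deriv_nonneg (convex_Ici 0) hdiff.continuous.continuousOn
      (fun x _ => (hdiff x).differentiableWithinAt)
    intro x hx
    rw [(hg x).deriv]
    exact h' x (le_of_lt (by simpa [interior_Ici] using hx))
  calc (0:ℝ) = g 0 := h0.symm
    _ ≤ g r := hmono Set.self_mem_Ici hr hr

/-- Comparison for the warping function: if `f 0 = 0`, `f' 0 = 1`, `f > 0` on `(0,∞)`
and `f'' ≥ k² f` on `[0,∞)`, then `f' r ≥ cosh(kr)` for all `r ≥ 0`. -/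
theorem stmt_6 (k : ℝ) (hk : 0 < k) (f : ℝ → ℝ)
    (hf : Differentiable ℝ f) (hf' : Differentiable ℝ (deriv f))
    (hf0 : f 0 = 0) (hf'0 : deriv f 0 = 1)
    (hfpos : ∀ r : ℝ, 0 < r → 0 < f r)
    (hcurv : ∀ r : ℝ, 0 ≤ r → k ^ 2 * f r ≤ deriv (deriv f) r) :
    ∀ r : ℝ, 0 ≤ r → Real.cosh (k * r) ≤ deriv f r := by
  -- basic derivative facts
  have hkx : ∀ x : ℝ, HasDerivAt (fun y : ℝ => k * y) k x := fun x => by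
    simpa using (hasDerivAt_id x).const_mul k
  have hsinh : ∀ x : ℝ, HasDerivAt (fun y => Real.sinh (k * y)) (k * Real.cosh (k * x)) x := by
    intro x
    simpa [mul_comm, Function.comp_def] using (Real.hasDerivAt_sinh (k * x)).comp x (hkx x)
  have hcosh : ∀ x : ℝ, HasDerivAt (fun y => Real.cosh (k * y)) (k * Real.sinh (k * x)) x := by
    intro x
    simpa [mul_comm, Function.comp_def] using (Real.hasDerivAt_cosh (k * x)).comp x (hkx x)
  have hexpneg : ∀ x : ℝ, HasDerivAt (fun y => Real.exp (-(k * y))) (-k * Real.exp (-(k * x))) x := by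
    intro x
    have h1 : HasDerivAt (fun y : ℝ => -(k * y)) (-k) x := ((hkx x).neg)
    simpa [mul_comm, Function.comp_def] using (Real.hasDerivAt_exp (-(k * x))).comp x h1
  have hexppos : ∀ x : ℝ, HasDerivAt (fun y => Real.exp (k * y)) (k * Real.exp (k * x)) x := by
    intro x
    simpa [mul_comm, Function.comp_def] using (Real.hasDerivAt_exp (k * x)).comp x (hkx x)
  -- v = k f - sinh(kr), v' = k f' - k cosh(kr)
  set v : ℝ → ℝ := fun r => k * f r - Real.sinh (k * r) with hv_def
  set v' : ℝ → ℝ := fun r => k * deriv f r - k * Real.cosh (k * r) with hv'_def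
  have hv : ∀ x, HasDerivAt v (v' x) x := fun x =>
    ((hf x).hasDerivAt.const_mul k).sub (hsinh x)
  have hv' : ∀ x, HasDerivAt v' (k * deriv (deriv f) x - k * (k * Real.sinh (k * x))) x :=
    fun x => ((hf' x).hasDerivAt.const_mul k).sub ((hcosh x).const_mul k)
  -- P = v' + k v
  set P : ℝ → ℝ := fun r => v' r + k * v r with hP_def
  have hP : ∀ x, HasDerivAt P
      ((k * deriv (deriv f) x - k * (k * Real.sinh (k * x))) + k * v' x) x :=
    fun x => (hv' x).add ((hv x).const_mul k)
  -- Step 1: Q = P e^{-kr} is nondecreasing, so P ≥ 0 on [0,∞)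
  have hPnonneg : ∀ r : ℝ, 0 ≤ r → 0 ≤ P r := by
    have hQ : ∀ x, HasDerivAt (fun y => P y * Real.exp (-(k * y)))
        (((k * deriv (deriv f) x - k * (k * Real.sinh (k * x))) + k * v' x) * Real.exp (-(k * x))
          + P x * (-k * Real.exp (-(k * x)))) x :=
      fun x => (hP x).mul (hexpneg x)
    have hQ0 : P 0 * Real.exp (-(k * 0)) = 0 := by
      simp [hP_def, hv'_def, hv_def, hf0, hf'0]
    have hQ' : ∀ r : ℝ, 0 ≤ r →
        0 ≤ ((k * deriv (deriv f) r - k * (k * Real.sinh (k * r))) + k * v' r) * Real.exp (-(k * r))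
          + P r * (-k * Real.exp (-(k * r))) := by
      intro r hr
      have h1 : k ^ 2 * f r ≤ deriv (deriv f) r := hcurv r hr
      have h2 : (0:ℝ) < Real.exp (-(k * r)) := Real.exp_pos _
      have key : ((k * deriv (deriv f) r - k * (k * Real.sinh (k * r))) + k * v' r)
          * Real.exp (-(k * r)) + P r * (-k * Real.exp (-(k * r)))
          = k * (deriv (deriv f) r - k ^ 2 * f r) * Real.exp (-(k * r)) := by
        simp only [hP_def, hv'_def, hv_def]; ring
      rw [key]
      have : 0 ≤ k * (deriv (deriv f) r - k ^ 2 * f r) := mul_nonneg hk.le (by linarith)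
      exact mul_nonneg this h2.le
    intro r hr
    have := stmt_6_aux (fun y => P y * Real.exp (-(k * y))) _ hQ hQ0 hQ' r hr
    nlinarith [Real.exp_pos (-(k * r)), this]
  -- Step 2: R = v e^{kr} is nondecreasing, so v ≥ 0 on [0,∞)
  have hvnonneg : ∀ r : ℝ, 0 ≤ r → 0 ≤ v r := by
    have hR : ∀ x, HasDerivAt (fun y => v y * Real.exp (k * y))
        (v' x * Real.exp (k * x) + v x * (k * Real.exp (k * x))) x :=
      fun x => (hv x).mul (hexppos x)
    have hR0 : v 0 * Real.exp (k * 0) = 0 := by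
      simp [hv_def, hf0]
    have hR' : ∀ r : ℝ, 0 ≤ r → 0 ≤ v' r * Real.exp (k * r) + v r * (k * Real.exp (k * r)) := by
      intro r hr
      have h1 := hPnonneg r hr
      have h2 : (0:ℝ) < Real.exp (k * r) := Real.exp_pos _
      have key : v' r * Real.exp (k * r) + v r * (k * Real.exp (k * r))
          = P r * Real.exp (k * r) := by simp only [hP_def]; ring
      rw [key]
      exact mul_nonneg h1 h2.le
    intro r hr
    have := stmt_6_aux (fun y => v y * Real.exp (k * y)) _ hR hR0 hR' r hr
    nlinarith [Real.exp_pos (k * r), this]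
  -- Step 3: u = f' - cosh(kr) is nondecreasing
  have hu : ∀ x, HasDerivAt (fun y => deriv f y - Real.cosh (k * y))
      (deriv (deriv f) x - k * Real.sinh (k * x)) x :=
    fun x => (hf' x).hasDerivAt.sub (hcosh x)
  have hu0 : deriv f 0 - Real.cosh (k * 0) = 0 := by simp [hf'0]
  have hu' : ∀ r : ℝ, 0 ≤ r → 0 ≤ deriv (deriv f) r - k * Real.sinh (k * r) := by
    intro r hr
    have h1 := hcurv r hr
    have h2 := hvnonneg r hr
    simp only [hv_def] at h2
    nlinarith [hk.le]
  intro r hr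
  have := stmt_6_aux (fun y => deriv f y - Real.cosh (k * y)) _ hu hu0 hu' r hr
  linarith
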